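/- Let P^⊥ and Q^⊥ be the linear cellular automaton shifts determined by Φ and Ψ respectively. If S(Φ) is not contained in S(Ψ), then every topological homomorphism φ : P^⊥ → Q^⊥ is identically zero. -/

import Mathlib

open MeasureTheory Filter Topology

namespace LCA

/-- The full shift `𝔽_p^{ℤ^d}`. -/
abbrev Full (p d : ℕ) : Type := (Fin d → ℤ) → ZMod p

/-- The shift action: `(σ_g x)(n) = x(n+g)`. -/
def shift (p d : ℕ) (g : Fin d → ℤ) (x : Full p d) : Full p d := fun n => x (n + g)

/-- `e_d = (0,…,0,1)`, the exponent of the "time" variable `X_d`. -/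
def eLast (d : ℕ) : Fin d → ℤ := fun i => if (i : ℕ) = d - 1 then 1 else 0

/-- The linear cellular automaton shift `P^⊥` for `P = X_d − Φ`, as a set:
all `x` with `x(n+e_d) = Σ_{m ∈ S(Φ)} Φ(m)·x(n+m)` for every `n`. -/
def Pperp (p d : ℕ) (Φ : (Fin d → ℤ) →₀ ZMod p) : Set (Full p d) :=
  {x | ∀ n : Fin d → ℤ, x (n + eLast d) = ∑ m ∈ Φ.support, Φ m * x (n + m)}

/-- `P^⊥` as a closed, shift-invariant subgroup of the full shift. -/
def PperpGroup (p d : ℕ) (Φ : (Fin d → ℤ) →₀ ZMod p) : AddSubgroup (Full p d) where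
  carrier := Pperp p d Φ
  zero_mem' := by intro n; simp
  add_mem' := by
    intro x y hx hy n
    simp only [Pi.add_apply, hx n, hy n, mul_add, Finset.sum_add_distrib]
  neg_mem' := by
    intro x hx n
    simp only [Pi.neg_apply, hx n, mul_neg, Finset.sum_neg_distrib, neg_inj]

lemma shift_mem_Pperp (p d : ℕ) (Φ : (Fin d → ℤ) →₀ ZMod p) (g : Fin d → ℤ)
    {x : Full p d} (hx : x ∈ Pperp p d Φ) : shift p d g x ∈ Pperp p d Φ := by
  intro n
  simpa [shift, add_right_comm] using hx (n + g)

/-- The shift action restricted to `P^⊥`. -/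
def shiftSub (p d : ℕ) (Φ : (Fin d → ℤ) →₀ ZMod p) (g : Fin d → ℤ)
    (x : PperpGroup p d Φ) : PperpGroup p d Φ :=
  ⟨shift p d g x.1, shift_mem_Pperp p d Φ g x.2⟩

end LCA

open LCA

namespace LCAAux
open LCA AddMonoidAlgebra

variable (p d : ℕ) [Fact p.Prime]

def shiftL (g : Fin d → ℤ) : Full p d →ₗ[ZMod p] Full p d where
  toFun x := shift p d g x
  map_add' x y := rfl
  map_smul' c x := rfl

def shiftHom : Multiplicative (Fin d → ℤ) →* Module.End (ZMod p) (Full p d) where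
  toFun g := shiftL p d g.toAdd
  map_one' := by
    apply LinearMap.ext; intro x; funext n
    simp [shiftL, shift, Module.End.one_apply]
  map_mul' a b := by
    apply LinearMap.ext; intro x; funext n
    simp [shiftL, shift, Module.End.mul_apply, add_assoc]
    exact congrArg x (add_assoc n _ _).symm

noncomputable def Θ : AddMonoidAlgebra (ZMod p) (Fin d → ℤ) →ₐ[ZMod p]
    Module.End (ZMod p) (Full p d) :=
  AddMonoidAlgebra.lift (ZMod p) _ (Fin d → ℤ) (shiftHom p d)

lemma theta_apply (f : AddMonoidAlgebra (ZMod p) (Fin d → ℤ)) (x : Full p d) (n : Fin d → ℤ) :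
    Θ p d f x n = ∑ m ∈ f.coeff.support, f.coeff m * x (n + m) := by
  rw [Θ, AddMonoidAlgebra.lift_apply]
  rw [Finsupp.sum]
  simp [LinearMap.sum_apply, shiftHom, shiftL, shift, Finset.sum_apply]


variable {p d}

def toA (Φ : (Fin d → ℤ) →₀ ZMod p) : AddMonoidAlgebra (ZMod p) (Fin d → ℤ) := AddMonoidAlgebra.ofCoeff Φ

lemma toA_eq_sum (Φ : (Fin d → ℤ) →₀ ZMod p) :
    toA Φ = ∑ m ∈ Φ.support, AddMonoidAlgebra.single m (Φ m) := by
  conv_lhs => rw [toA, ← Finsupp.sum_single Φ]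
  rw [Finsupp.sum, AddMonoidAlgebra.ofCoeff_sum]
  rfl

lemma theta_single_apply (a : Fin d → ℤ) (b : ZMod p) (x : Full p d) (n : Fin d → ℤ) :
    Θ p d (AddMonoidAlgebra.single a b) x n = b * x (n + a) := by
  rw [Θ, AddMonoidAlgebra.lift_single]
  rfl

lemma theta_toA_apply (Φ : (Fin d → ℤ) →₀ ZMod p) (x : Full p d) (n : Fin d → ℤ) :
    Θ p d (toA Φ) x n = ∑ m ∈ Φ.support, Φ m * x (n + m) :=
  theta_apply p d (toA Φ) x n

lemma mem_iff (Φ : (Fin d → ℤ) →₀ ZMod p) (x : Full p d) :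
    x ∈ Pperp p d Φ ↔
      Θ p d (AddMonoidAlgebra.single (eLast d) 1 - toA Φ) x = 0 := by
  have key : ∀ n, Θ p d (AddMonoidAlgebra.single (eLast d) 1 - toA Φ) x n
      = x (n + eLast d) - ∑ m ∈ Φ.support, Φ m * x (n + m) := by
    intro n
    rw [map_sub, LinearMap.sub_apply, Pi.sub_apply, theta_single_apply, theta_toA_apply,
      one_mul]
  constructor
  · intro hx; funext n
    rw [key n, hx n, sub_self]; rfl
  · intro h n
    have h2 := congrFun h n
    rw [key n] at h2
    have h0 : (0 : Full p d) n = 0 := rfl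
    rw [h0] at h2
    exact sub_eq_zero.mp h2

lemma pow_eq (Φ : (Fin d → ℤ) →₀ ZMod p) (k : ℕ) :
    (AddMonoidAlgebra.single (eLast d) 1 - toA Φ) ^ (p ^ k)
      = AddMonoidAlgebra.single ((p ^ k) • eLast d) 1
        - ∑ m ∈ Φ.support, AddMonoidAlgebra.single ((p ^ k) • m) (Φ m) := by
  haveI : CharP (AddMonoidAlgebra (ZMod p) (Fin d → ℤ)) p :=
    charP_of_injective_algebraMap' (ZMod p) p
  rw [sub_pow_char_pow]
  congr 1
  · rw [AddMonoidAlgebra.single_pow, one_pow]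
  · rw [toA_eq_sum Φ, sum_pow_char_pow]
    refine Finset.sum_congr rfl fun m _ => ?_
    rw [AddMonoidAlgebra.single_pow, ZMod.pow_card_pow]

lemma rel_scale {Φ : (Fin d → ℤ) →₀ ZMod p} {x : Full p d} (hx : x ∈ Pperp p d Φ)
    (k : ℕ) (n : Fin d → ℤ) :
    x (n + (p ^ k) • eLast d) = ∑ m ∈ Φ.support, Φ m * x (n + (p ^ k) • m) := by
  have h0 := (mem_iff Φ x).mp hx
  have h1 : Θ p d ((AddMonoidAlgebra.single (eLast d) 1 - toA Φ) ^ (p ^ k)) x = 0 := by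
    rw [map_pow]
    obtain ⟨N, hN⟩ : ∃ N, p ^ k = N + 1 :=
      ⟨p ^ k - 1, (Nat.succ_pred_eq_of_pos (pow_pos (Fact.out (p := p.Prime)).pos k)).symm⟩
    rw [hN, pow_succ, Module.End.mul_apply, h0, map_zero]
  rw [pow_eq] at h1
  have h2 := congrFun h1 n
  rw [map_sub, LinearMap.sub_apply, Pi.sub_apply, theta_single_apply, one_mul] at h2
  have h3 : Θ p d (∑ m ∈ Φ.support,
      AddMonoidAlgebra.single ((p ^ k) • m) (Φ m)) x n
      = ∑ m ∈ Φ.support, Φ m * x (n + (p ^ k) • m) := by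
    rw [map_sum]
    simp only [LinearMap.coe_sum, Finset.sum_apply, theta_single_apply]
  rw [h3] at h2
  have h0' : (0 : Full p d) n = 0 := rfl
  rw [h0'] at h2
  exact sub_eq_zero.mp h2


lemma isClosed_Pperp (Φ : (Fin d → ℤ) →₀ ZMod p) : IsClosed (Pperp p d Φ) := by
  have : Pperp p d Φ = ⋂ n : Fin d → ℤ,
      {x : Full p d | x (n + eLast d) = ∑ m ∈ Φ.support, Φ m * x (n + m)} := by
    ext x; simp only [Pperp, Set.mem_iInter, Set.mem_setOf_eq]
  rw [this]
  refine isClosed_iInter fun n => ?_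
  have hc1 : Continuous fun x : Full p d => x (n + eLast d) := continuous_apply _
  have hc2 : Continuous fun x : Full p d => ∑ m ∈ Φ.support, Φ m * x (n + m) :=
    continuous_finset_sum _ fun m _ => continuous_const.mul (continuous_apply _)
  exact isClosed_eq hc1 hc2

lemma exists_window {Φ : (Fin d → ℤ) →₀ ZMod p} {F : ↥(PperpGroup p d Φ) → ZMod p}
    (hF : Continuous F) :
    ∃ Wb : Finset (Fin d → ℤ), ∀ x y : ↥(PperpGroup p d Φ),
      (∀ w ∈ Wb, x.1 w = y.1 w) → F x = F y := by
  haveI : CompactSpace ↥(PperpGroup p d Φ) :=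
    isCompact_iff_compactSpace.mp (isClosed_Pperp Φ).isCompact
  -- for each point, a finite window with cylinder inside the fiber
  have step : ∀ x : ↥(PperpGroup p d Φ), ∃ I : Finset (Fin d → ℤ),
      ∀ y : ↥(PperpGroup p d Φ), (∀ a ∈ I, y.1 a = x.1 a) → F y = F x := by
    intro x
    have hopen : IsOpen (F ⁻¹' {F x}) := (isOpen_discrete _).preimage hF
    obtain ⟨V, hV, hVeq⟩ := isOpen_induced_iff.mp hopen
    have hxV : x.1 ∈ V := by
      have : x ∈ F ⁻¹' {F x} := rfl
      rw [← hVeq] at this; exact this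
    obtain ⟨I, u, hu, hsub⟩ := isOpen_pi_iff.mp hV x.1 hxV
    refine ⟨I, fun y hy => ?_⟩
    have hyV : y.1 ∈ V := by
      apply hsub
      intro a ha
      rw [hy a ha]
      exact (hu a ha).2
    have : y ∈ F ⁻¹' {F x} := by rw [← hVeq]; exact hyV
    exact this
  choose I hI using step
  obtain ⟨t, ht⟩ := isCompact_univ.elim_finite_subcover
    (fun x : ↥(PperpGroup p d Φ) => {y : ↥(PperpGroup p d Φ) | ∀ a ∈ I x, y.1 a = x.1 a})
    (fun x => by
      have heq : {y : ↥(PperpGroup p d Φ) | ∀ a ∈ I x, y.1 a = x.1 a}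
          = ⋂ a ∈ I x, (fun y : ↥(PperpGroup p d Φ) => y.1 a) ⁻¹' {x.1 a} := by
        ext y; simp
      show IsOpen {y : ↥(PperpGroup p d Φ) | ∀ a ∈ I x, y.1 a = x.1 a}
      rw [heq]
      exact isOpen_biInter_finset fun a _ =>
        (isOpen_discrete _).preimage ((continuous_apply a).comp continuous_subtype_val))
    (fun y _ => Set.mem_iUnion.mpr ⟨y, fun a _ => rfl⟩)
  refine ⟨t.sup I, fun x y hxy => ?_⟩
  obtain ⟨x₀, hx₀t, hx₀⟩ : ∃ x₀ ∈ t, ∀ a ∈ I x₀, x.1 a = x₀.1 a := by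
    have := ht (Set.mem_univ x)
    simp only [Set.mem_iUnion] at this
    obtain ⟨x₀, hx₀t, hmem⟩ := this
    exact ⟨x₀, hx₀t, hmem⟩
  have h1 : F x = F x₀ := hI x₀ x hx₀
  have h2 : F y = F x₀ := by
    refine hI x₀ y fun a ha => ?_
    rw [← hxy a (Finset.mem_sup.mpr ⟨x₀, hx₀t, ha⟩), hx₀ a ha]
  rw [h1, h2]


/-! ### separating functional -/

lemma sum_base_eq_zero (B' : ℕ) :
    ∀ (D : ℕ) (a : ℕ → ℤ), (∀ i, (a i).natAbs ≤ B') →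
      (∑ i ∈ Finset.range D, a i * (2 * (B' : ℤ) + 1) ^ i = 0) → ∀ i < D, a i = 0 := by
  intro D
  induction D with
  | zero => intro a _ _ i hi; omega
  | succ D ih =>
    intro a hb h i hi
    set N : ℤ := 2 * (B' : ℤ) + 1 with hN
    have hNpos : 0 < N := by positivity
    have habs : |∑ i ∈ Finset.range D, a i * N ^ i| ≤ (B' : ℤ) * ∑ i ∈ Finset.range D, N ^ i := by
      calc |∑ i ∈ Finset.range D, a i * N ^ i| ≤ ∑ i ∈ Finset.range D, |a i * N ^ i| :=
            Finset.abs_sum_le_sum_abs _ _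
        _ ≤ ∑ i ∈ Finset.range D, (B' : ℤ) * N ^ i := by
            refine Finset.sum_le_sum fun j _ => ?_
            rw [abs_mul, abs_pow, abs_of_pos hNpos]
            have : |a j| ≤ (B' : ℤ) := by
              have := hb j
              rw [Int.abs_eq_natAbs]
              exact_mod_cast this
            exact mul_le_mul_of_nonneg_right this (pow_nonneg hNpos.le j)
        _ = (B' : ℤ) * ∑ i ∈ Finset.range D, N ^ i := by rw [Finset.mul_sum]
    have hgeom : (∑ i ∈ Finset.range D, N ^ i) * (N - 1) = N ^ D - 1 := geom_sum_mul N D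
    have h2 : 2 * ((B' : ℤ) * ∑ i ∈ Finset.range D, N ^ i) = N ^ D - 1 := by
      have : (N - 1) = 2 * (B' : ℤ) := by rw [hN]; ring
      calc 2 * ((B' : ℤ) * ∑ i ∈ Finset.range D, N ^ i)
          = (∑ i ∈ Finset.range D, N ^ i) * (N - 1) := by rw [this]; ring
        _ = N ^ D - 1 := hgeom
    have haD : a D = 0 := by
      by_contra hc
      have h1 : (1 : ℤ) ≤ |a D| := Int.one_le_abs hc
      have hD : a D * N ^ D = - ∑ i ∈ Finset.range D, a i * N ^ i := by
        rw [Finset.sum_range_succ] at h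
        linarith
      have : N ^ D ≤ |a D * N ^ D| := by
        rw [abs_mul, abs_pow, abs_of_pos hNpos]
        nlinarith [pow_pos hNpos D]
      rw [hD, abs_neg] at this
      nlinarith [pow_pos hNpos D]
    have hsum : ∑ i ∈ Finset.range D, a i * N ^ i = 0 := by
      rw [Finset.sum_range_succ, haD] at h
      simpa using h
    rcases Nat.lt_succ_iff_lt_or_eq.mp hi with h' | h'
    · exact ih a hb hsum i h'
    · rw [h']; exact haD

def lincomb (N : ℤ) : (Fin d → ℤ) →+ ℤ where
  toFun v := ∑ i, v i * N ^ (i : ℕ)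
  map_zero' := by simp
  map_add' v w := by
    simp only [Pi.add_apply, add_mul, Finset.sum_add_distrib]

lemma exists_sep (S : Finset (Fin d → ℤ)) (hS : S.Nonempty) :
    ∃ (θ : (Fin d → ℤ) →+ ℤ) (mstar : Fin d → ℤ), mstar ∈ S ∧
      ∀ m ∈ S, m ≠ mstar → θ m < θ mstar := by
  classical
  set B : ℕ := S.sup (fun s => Finset.univ.sup fun i => (s i).natAbs) with hB
  set θ : (Fin d → ℤ) →+ ℤ := lincomb (2 * ((2 * B : ℕ) : ℤ) + 1) with hθ
  have hinj : ∀ u ∈ S, ∀ v ∈ S, θ u = θ v → u = v := by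
    intro u hu v hv huv
    have hbound : ∀ i : Fin d, ((u - v) i).natAbs ≤ 2 * B := by
      intro i
      have h1 : (u i).natAbs ≤ B := by
        have hx : (u i).natAbs ≤ Finset.univ.sup (fun i => (u i).natAbs) :=
          Finset.le_sup (f := fun i => (u i).natAbs) (Finset.mem_univ i)
        have hy2 : Finset.univ.sup (fun i => (u i).natAbs) ≤ B :=
          Finset.le_sup (f := fun s => Finset.univ.sup fun i => (s i).natAbs) hu
        exact le_trans hx hy2
      have h2 : (v i).natAbs ≤ B := by
        have hx : (v i).natAbs ≤ Finset.univ.sup (fun i => (v i).natAbs) :=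
          Finset.le_sup (f := fun i => (v i).natAbs) (Finset.mem_univ i)
        have hy2 : Finset.univ.sup (fun i => (v i).natAbs) ≤ B :=
          Finset.le_sup (f := fun s => Finset.univ.sup fun i => (s i).natAbs) hv
        exact le_trans hx hy2
      have heq : (u - v) i = u i - v i := rfl
      rw [heq]
      calc (u i - v i).natAbs ≤ (u i).natAbs + (v i).natAbs := Int.natAbs_sub_le _ _
        _ ≤ B + B := Nat.add_le_add h1 h2
        _ = 2 * B := (Nat.two_mul B).symm
    have hzero : θ (u - v) = 0 := by rw [map_sub, huv, sub_self]
    set a : ℕ → ℤ := fun j => if h : j < d then (u - v) ⟨j, h⟩ else 0 with ha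
    have hab : ∀ j, (a j).natAbs ≤ 2 * B := by
      intro j; rw [ha]; dsimp only
      split
      · exact hbound _
      · simp
    have hθuv : θ (u - v)
        = ∑ i : Fin d, (u - v) i * (2 * ((2 * B : ℕ) : ℤ) + 1) ^ (i : ℕ) := rfl
    have hsum : ∑ j ∈ Finset.range d, a j * (2 * ((2 * B : ℕ) : ℤ) + 1) ^ j = 0 := by
      rw [← hzero, hθuv,
        ← Fin.sum_univ_eq_sum_range (fun j => a j * (2 * ((2 * B : ℕ) : ℤ) + 1) ^ j) d]
      refine Finset.sum_congr rfl fun i _ => ?_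
      simp only [ha]
      rw [dif_pos i.isLt]
    have := sum_base_eq_zero (2 * B) d a hab hsum
    funext i
    have h0 := this i i.isLt
    rw [ha] at h0; dsimp only at h0
    rw [dif_pos i.isLt] at h0
    have : (u - v) i = 0 := by
      have : (⟨(i : ℕ), i.isLt⟩ : Fin d) = i := Fin.eta i i.isLt
      rwa [this] at h0
    have huvi : u i - v i = 0 := this
    exact sub_eq_zero.mp huvi
  obtain ⟨mstar, hmem, hmax⟩ := Finset.exists_max_image S θ hS
  refine ⟨θ, mstar, hmem, fun m hm hne => ?_⟩
  rcases lt_or_eq_of_le (hmax m hm) with h | h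
  · exact h
  · exact absurd (hinj m hm mstar hmem h) hne

/-! ### the CA map and its surjectivity -/

def Tmap (Φ : (Fin d → ℤ) →₀ ZMod p) (y : Full p d) : Full p d :=
  fun n => ∑ m ∈ Φ.support, Φ m * y (n + m)

lemma finite_solve (Φ : (Fin d → ℤ) →₀ ZMod p) (hne : Φ.support.Nonempty)
    (w : Full p d) (F : Finset (Fin d → ℤ)) :
    ∃ y : Full p d, ∀ n ∈ F, Tmap Φ y n = w n := by
  classical
  obtain ⟨θ, mstar, hmem, hmax⟩ := exists_sep Φ.support hne
  induction F using Finset.strongInduction with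
  | _ F ih =>
    rcases F.eq_empty_or_nonempty with rfl | hFne
    · exact ⟨0, by simp⟩
    obtain ⟨ns, hns, hnsmax⟩ := Finset.exists_max_image F θ hFne
    obtain ⟨y', hy'⟩ := ih (F.erase ns) (Finset.erase_ssubset hns)
    set c : ZMod p := (Φ mstar)⁻¹ * (w ns - Tmap Φ y' ns) with hc
    set y : Full p d := fun j => y' j + if j = ns + mstar then c else 0 with hy
    have hT : ∀ n, Tmap Φ y n = Tmap Φ y' n +
        (if ns + mstar - n ∈ Φ.support then Φ (ns + mstar - n) * c else 0) := by
      intro n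
      have : ∀ m, Φ m * y (n + m) = Φ m * y' (n + m)
          + (if m = ns + mstar - n then Φ m * c else 0) := by
        intro m
        simp only [hy]
        rw [mul_add]
        congr 1
        by_cases hm : n + m = ns + mstar
        · rw [if_pos hm, if_pos (by rw [← hm]; abel)]
        · rw [if_neg hm, if_neg (by intro hcon; apply hm; rw [hcon]; abel), mul_zero]
      rw [Tmap]
      rw [Finset.sum_congr rfl fun m _ => this m, Finset.sum_add_distrib]
      congr 1
      rw [Finset.sum_ite_eq' Φ.support (ns + mstar - n) (fun m => Φ m * c)]
    refine ⟨y, fun n hn => ?_⟩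
    by_cases hns' : n = ns
    · subst hns'
      rw [hT n]
      have : n + mstar - n = mstar := by abel
      rw [this, if_pos hmem, hc]
      have hΦne : Φ mstar ≠ 0 := Finsupp.mem_support_iff.mp hmem
      field_simp
      ring
    · have hnF' : n ∈ F.erase ns := Finset.mem_erase.mpr ⟨hns', hn⟩
      rw [hT n]
      have hcond : ns + mstar - n ∉ Φ.support := by
        intro hcon
        have hsum : n + (ns + mstar - n) = ns + mstar := by abel
        have hθeq : θ n + θ (ns + mstar - n) = θ ns + θ mstar := by
          rw [← map_add, hsum, map_add]
        have hle : θ n ≤ θ ns := hnsmax n hn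
        by_cases hmm : ns + mstar - n = mstar
        · apply hns'
          have : n + mstar = ns + mstar := by rw [← hsum, hmm]
          exact add_right_cancel this
        · have := hmax _ hcon hmm
          omega
      rw [if_neg hcond, add_zero]
      exact hy' n hnF'

lemma Tmap_surj (Φ : (Fin d → ℤ) →₀ ZMod p) (hne : Φ.support.Nonempty) (w : Full p d) :
    ∃ y : Full p d, Tmap Φ y = w := by
  classical
  set Z : Finset (Fin d → ℤ) → Set (Full p d) :=
    fun F => {y | ∀ n ∈ F, Tmap Φ y n = w n} with hZ
  have hdir : Directed (· ⊇ ·) Z := by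
    intro F F'
    exact ⟨F ∪ F', fun y hy n hn => hy n (Finset.mem_union_left _ hn),
      fun y hy n hn => hy n (Finset.mem_union_right _ hn)⟩
  have hclosed : ∀ F, IsClosed (Z F) := by
    intro F
    have : Z F = ⋂ n ∈ F, {y : Full p d | Tmap Φ y n = w n} := by
      ext y; simp [hZ]
    rw [this]
    refine isClosed_biInter fun n _ => ?_
    exact isClosed_eq
      (continuous_finset_sum _ fun m _ => continuous_const.mul (continuous_apply _))
      continuous_const
  obtain ⟨y, hy⟩ := IsCompact.nonempty_iInter_of_directed_nonempty_isCompact_isClosed Z hdir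
    (fun F => finite_solve Φ hne w F) (fun F => (hclosed F).isCompact) hclosed
  refine ⟨y, funext fun n => ?_⟩
  exact (Set.mem_iInter.mp hy {n}) n (Finset.mem_singleton_self n)


lemma const_mul_mem {Φ : (Fin d → ℤ) →₀ ZMod p} (cst : ZMod p) {x : Full p d}
    (hx : x ∈ Pperp p d Φ) : (fun n => cst * x n) ∈ Pperp p d Φ := by
  intro n
  dsimp only
  rw [hx n, Finset.mul_sum]
  exact Finset.sum_congr rfl fun m _ => by ring

/-! ### slices and gluing -/

lemma Tmap_slice {Φ : (Fin d → ℤ) →₀ ZMod p} {η : Full p d} (hη : η ∈ Pperp p d Φ) (t : ℤ) :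
    Tmap Φ (fun n => η (n + t • eLast d)) = fun n => η (n + (t + 1) • eLast d) := by
  funext n
  have := hη (n + t • eLast d)
  rw [Tmap]
  rw [show n + (t + 1) • eLast d = n + t • eLast d + eLast d from by
    funext i
    simp only [Pi.add_apply, Pi.smul_apply, smul_eq_mul]
    ring, this]
  refine Finset.sum_congr rfl fun m _ => ?_
  congr 1
  abel

lemma mem_Pperp_of_slices (hd : 0 < d) (Φ : (Fin d → ℤ) →₀ ZMod p)
    (hΦL : ∀ m ∈ Φ.support, m ⟨d - 1, by omega⟩ = 0)
    (y : ℤ → Full p d) (hstep : ∀ t : ℤ, y (t + 1) = Tmap Φ (y t)) :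
    (fun n : Fin d → ℤ => y (n ⟨d - 1, by omega⟩) (n - (n ⟨d - 1, by omega⟩) • eLast d))
      ∈ Pperp p d Φ := by
  set L : Fin d := ⟨d - 1, by omega⟩ with hL
  intro n
  show y ((n + eLast d) L) (n + eLast d - ((n + eLast d) L) • eLast d)
      = ∑ m ∈ Φ.support, Φ m * y ((n + m) L) (n + m - ((n + m) L) • eLast d)
  have heL : eLast d L = 1 := by rw [eLast, hL]; exact if_pos rfl
  have h1 : (n + eLast d) L = n L + 1 := by
    show n L + eLast d L = n L + 1
    rw [heL]
  rw [h1, hstep (n L), Tmap]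
  have h2 : n + eLast d - (n L + 1) • eLast d = n - (n L) • eLast d := by
    funext i
    simp only [Pi.add_apply, Pi.sub_apply, Pi.smul_apply, smul_eq_mul]
    ring
  rw [h2]
  refine Finset.sum_congr rfl fun m hm => ?_
  have h3 : (n + m) L = n L := by
    show n L + m L = n L
    rw [hΦL m hm, add_zero]
  rw [h3]
  congr 2
  abel

lemma glue (hd : 0 < d) (Φ : (Fin d → ℤ) →₀ ZMod p)
    (hΦL : ∀ m ∈ Φ.support, m ⟨d - 1, by omega⟩ = 0) (hne : Φ.support.Nonempty)
    (r R0 : ℕ) (hR0 : ∀ m ∈ Φ.support, ∀ i, (m i).natAbs ≤ R0)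
    (η : Full p d) (hη : η ∈ Pperp p d Φ)
    (g0 : Fin d → ℤ) (hg0 : g0 ⟨d - 1, by omega⟩ = 0)
    (G : Finset (Fin d → ℤ)) (hG : ∀ g ∈ G, g ⟨d - 1, by omega⟩ = 0)
    (hsepa : ∀ g ∈ G, ∀ n : Fin d → ℤ,
      ¬ ((∀ i, (n i - g0 i).natAbs ≤ r + 2 * r * R0)
          ∧ (∀ i, (n i - g i).natAbs ≤ r + 2 * r * R0))) :
    ∃ δ ∈ Pperp p d Φ,
      (∀ w : Fin d → ℤ, (∀ i, (w i).natAbs ≤ r) → δ (g0 + w) = η (g0 + w))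
        ∧ (∀ g ∈ G, ∀ w : Fin d → ℤ, (∀ i, (w i).natAbs ≤ r) → δ (g + w) = 0) := by
  classical
  set L : Fin d := ⟨d - 1, by omega⟩ with hL
  set ysl : ℤ → Full p d := fun t n => η (n + t • eLast d) with hysl
  have hslstep : ∀ t : ℤ, Tmap Φ (ysl t) = ysl (t + 1) := fun t => Tmap_slice hη t
  set u : Full p d := fun n =>
    if ∀ i, (n i - g0 i).natAbs ≤ r + 2 * r * R0 then ysl (-(r : ℤ)) n else 0 with hu
  set zseq : ℕ → Full p d := fun j => (Tmap Φ)^[j] u with hz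
  have hz0 : zseq 0 = u := rfl
  have hzs : ∀ j, zseq (j + 1) = Tmap Φ (zseq j) := by
    intro j
    rw [hz]
    exact Function.iterate_succ_apply' (Tmap Φ) j u
  set wseq : ℕ → Full p d := fun j => Nat.rec u
    (fun _ prev => Classical.choose (Tmap_surj Φ hne prev)) j with hw
  have hws : ∀ j, Tmap Φ (wseq (j + 1)) = wseq j := by
    intro j
    exact Classical.choose_spec (Tmap_surj Φ hne (wseq j))
  set y : ℤ → Full p d := fun t =>
    if -(r : ℤ) ≤ t then zseq (t + r).toNat else wseq (-(r : ℤ) - t).toNat with hy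
  have hystep : ∀ t : ℤ, y (t + 1) = Tmap Φ (y t) := by
    intro t
    by_cases h1 : -(r : ℤ) ≤ t
    · have h2 : -(r : ℤ) ≤ t + 1 := by omega
      rw [hy]
      dsimp only
      rw [if_pos h2, if_pos h1]
      have : (t + 1 + r).toNat = (t + r).toNat + 1 := by omega
      rw [this, hzs]
    · by_cases h2 : -(r : ℤ) ≤ t + 1
      · have ht : t = -(r : ℤ) - 1 := by omega
        rw [hy]
        dsimp only
        rw [if_pos h2, if_neg h1]
        have e1 : (t + 1 + r).toNat = 0 := by omega
        have e2 : (-(r : ℤ) - t).toNat = 1 := by omega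
        rw [e1, e2, hz0]
        exact (hws 0).symm
      · rw [hy]
        dsimp only
        rw [if_neg h2, if_neg h1]
        have e1 : (-(r : ℤ) - t).toNat = (-(r : ℤ) - (t + 1)).toNat + 1 := by omega
        rw [e1]
        exact (hws _).symm
  -- the two box claims, by induction on j
  have claims : ∀ j, j ≤ 2 * r →
      (∀ n : Fin d → ℤ, (∀ i, (n i - g0 i).natAbs ≤ r + (2 * r - j) * R0) →
          zseq j n = ysl (-(r : ℤ) + j) n)
        ∧ (∀ g ∈ G, ∀ n : Fin d → ℤ, (∀ i, (n i - g i).natAbs ≤ r + (2 * r - j) * R0) →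
          zseq j n = 0) := by
    intro j
    induction j with
    | zero =>
      intro _
      constructor
      · intro n hn
        rw [hz0, hu]
        dsimp only
        rw [if_pos (by simpa using hn)]
        norm_num
      · intro g hg n hn
        rw [hz0, hu]
        dsimp only
        rw [if_neg (fun hcon => hsepa g hg n ⟨hcon, by simpa using hn⟩)]
    | succ j ih =>
      intro hj1
      have hj : j ≤ 2 * r := by omega
      obtain ⟨ih1, ih2⟩ := ih hj
      have hradd : r + (2 * r - (j + 1)) * R0 + R0 = r + (2 * r - j) * R0 := by
        have : 2 * r - j = (2 * r - (j + 1)) + 1 := by omega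
        rw [this]
        ring
      constructor
      · intro n hn
        rw [hzs, Tmap]
        have : ∀ m ∈ Φ.support, zseq j (n + m) = ysl (-(r : ℤ) + j) (n + m) := by
          intro m hm
          refine ih1 (n + m) fun i => ?_
          have hmi := hR0 m hm i
          have hni := hn i
          have : (n + m) i - g0 i = (n i - g0 i) + m i := by
            show n i + m i - g0 i = (n i - g0 i) + m i
            ring
          rw [this]
          calc ((n i - g0 i) + m i).natAbs ≤ (n i - g0 i).natAbs + (m i).natAbs :=
                Int.natAbs_add_le _ _
            _ ≤ (r + (2 * r - (j + 1)) * R0) + R0 := Nat.add_le_add hni hmi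
            _ = r + (2 * r - j) * R0 := hradd
        rw [Finset.sum_congr rfl fun m hm => by rw [this m hm]]
        have := congrFun (hslstep (-(r : ℤ) + j)) n
        rw [Tmap] at this
        rw [this]
        congr 1
        push_cast
        ring
      · intro g hg n hn
        rw [hzs, Tmap]
        have : ∀ m ∈ Φ.support, zseq j (n + m) = 0 := by
          intro m hm
          refine ih2 g hg (n + m) fun i => ?_
          have hmi := hR0 m hm i
          have hni := hn i
          have heq : (n + m) i - g i = (n i - g i) + m i := by
            show n i + m i - g i = (n i - g i) + m i
            ring
          rw [heq]
          calc ((n i - g i) + m i).natAbs ≤ (n i - g i).natAbs + (m i).natAbs :=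
                Int.natAbs_add_le _ _
            _ ≤ (r + (2 * r - (j + 1)) * R0) + R0 := Nat.add_le_add hni hmi
            _ = r + (2 * r - j) * R0 := hradd
        rw [Finset.sum_congr rfl fun m hm => by rw [this m hm, mul_zero]]
        exact Finset.sum_const_zero
  set δ : Full p d := fun n => y (n L) (n - (n L) • eLast d) with hδ
  have hδmem : δ ∈ Pperp p d Φ := mem_Pperp_of_slices hd Φ hΦL y hystep
  have key : ∀ (g : Fin d → ℤ), g L = 0 → ∀ w : Fin d → ℤ, (∀ i, (w i).natAbs ≤ r) →
      ∃ j : ℕ, j ≤ 2 * r ∧ δ (g + w) = zseq j (g + w - (w L) • eLast d)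
        ∧ (-(r : ℤ) + j) = w L
        ∧ (∀ i, ((g + w - (w L) • eLast d) i - g i).natAbs ≤ r + (2 * r - j) * R0) := by
    intro g hgL w hwr
    have htL : (g + w) L = w L := by
      show g L + w L = w L
      rw [hgL, zero_add]
    have hwLr : (w L).natAbs ≤ r := hwr L
    have h1 : -(r : ℤ) ≤ w L := by omega
    refine ⟨(w L + r).toNat, by omega, ?_, by omega, ?_⟩
    · show y ((g + w) L) (g + w - ((g + w) L) • eLast d) = _
      rw [htL, hy]
      show (if -(r:ℤ) ≤ w L then zseq (w L + r).toNat else wseq (-(r : ℤ) - w L).toNat)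
          (g + w - (w L) • eLast d) = _
      rw [if_pos h1]
    · intro i
      have heq : (g + w - (w L) • eLast d) i - g i = w i - (w L) * eLast d i := by
        show g i + w i - (w L) * eLast d i - g i = w i - (w L) * eLast d i
        ring
      rw [heq]
      by_cases hiL : i = L
      · rw [hiL]
        have : eLast d L = 1 := by rw [eLast, hL]; exact if_pos rfl
        rw [this, mul_one, sub_self]
        simp
      · have : eLast d i = 0 := by
          rw [eLast]
          rw [if_neg ?_]
          intro hcon
          apply hiL
          apply Fin.ext
          rw [hcon, hL]
        rw [this, mul_zero, sub_zero]
        exact le_trans (hwr i) (Nat.le_add_right _ _)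
  refine ⟨δ, hδmem, ?_, ?_⟩
  · intro w hwr
    obtain ⟨j, hj, he1, he2, he3⟩ := key g0 hg0 w hwr
    rw [he1, (claims j hj).1 _ he3, hysl]
    dsimp only
    rw [he2]
    congr 1
    abel
  · intro g hg w hwr
    obtain ⟨j, hj, he1, he2, he3⟩ := key g (hG g hg) w hwr
    rw [he1]
    exact (claims j hj).2 g hg _ he3

end LCAAux

/-- If `S(Φ)` is not contained in `S(Ψ)`, then every topological
homomorphism `φ : P^⊥ → Q^⊥` is identically zero. -/
theorem hom_trivial_of_not_subset (p d : ℕ) [Fact p.Prime] (hd : 2 ≤ d)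
    (Φ Ψ : (Fin d → ℤ) →₀ ZMod p)
    (hΦsupp : ∀ m ∈ Φ.support, m ⟨d - 1, by omega⟩ = 0)
    (hΨsupp : ∀ m ∈ Ψ.support, m ⟨d - 1, by omega⟩ = 0)
    (hΦ2 : 2 ≤ Φ.support.card) (hΨ2 : 2 ≤ Ψ.support.card)
    (hnotsub : ¬ Φ.support ⊆ Ψ.support)
    (φ : PperpGroup p d Φ → PperpGroup p d Ψ)
    (hcont : Continuous φ) (h0 : φ 0 = 0)
    (hequiv : ∀ (g : Fin d → ℤ) (x : PperpGroup p d Φ),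
      φ (shiftSub p d Φ g x) = shiftSub p d Ψ g (φ x)) :
    ∀ x : PperpGroup p d Φ, φ x = 0 := by
  classical
  have hd0 : 0 < d := by omega
  obtain ⟨Wb, hWb⟩ := LCAAux.exists_window (Φ := Φ) (F := fun x => (φ x).1 0)
    (((continuous_apply (0 : Fin d → ℤ)).comp continuous_subtype_val).comp hcont)
  have hwin : ∀ (g : Fin d → ℤ) (x y : ↥(PperpGroup p d Φ)),
      (∀ w ∈ Wb, x.1 (w + g) = y.1 (w + g)) → (φ x).1 g = (φ y).1 g := by
    intro g x y hagree
    have h1 := hWb (shiftSub p d Φ g x) (shiftSub p d Φ g y) (fun w hw => hagree w hw)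
    rw [hequiv g x, hequiv g y] at h1
    have e1 : (shiftSub p d Ψ g (φ x)).1 0 = (φ x).1 g := by
      show (φ x).1 (0 + g) = (φ x).1 g
      rw [zero_add]
    have e2 : (shiftSub p d Ψ g (φ y)).1 0 = (φ y).1 g := by
      show (φ y).1 (0 + g) = (φ y).1 g
      rw [zero_add]
    rwa [e1, e2] at h1
  obtain ⟨r, hrW⟩ : ∃ r : ℕ, ∀ w ∈ Wb, ∀ i : Fin d, (w i).natAbs ≤ r := by
    refine ⟨Wb.sup (fun w => Finset.univ.sup fun i => (w i).natAbs), fun w hw i => ?_⟩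
    exact le_trans (Finset.le_sup (f := fun i => (w i).natAbs) (Finset.mem_univ i))
      (Finset.le_sup (f := fun w => Finset.univ.sup fun i => (w i).natAbs) hw)
  obtain ⟨R0, hR0⟩ : ∃ R0 : ℕ, ∀ m ∈ Φ.support, ∀ i : Fin d, (m i).natAbs ≤ R0 := by
    refine ⟨Φ.support.sup (fun m => Finset.univ.sup fun i => (m i).natAbs), fun m hm i => ?_⟩
    exact le_trans (Finset.le_sup (f := fun i => (m i).natAbs) (Finset.mem_univ i))
      (Finset.le_sup (f := fun m => Finset.univ.sup fun i => (m i).natAbs) hm)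
  set M : ℕ := 2 * (r + 2 * r * R0) with hM
  set k : ℕ := M + 1 with hk
  have hpk : M < p ^ k := by
    have h1 : M < 2 ^ k := by
      have := Nat.lt_two_pow_self (n := k)
      omega
    exact lt_of_lt_of_le h1 (Nat.pow_le_pow_left (Fact.out (p := p.Prime)).two_le k)
  obtain ⟨m₀, hm₀Φ, hm₀Ψ⟩ := Finset.not_subset.mp hnotsub
  set c : Fin d → ℤ := (p ^ k) • eLast d with hc
  have hΦne : Φ.support.Nonempty := ⟨m₀, hm₀Φ⟩
  -- key claim: φ always vanishes at the point c
  have key : ∀ x : ↥(PperpGroup p d Φ), (φ x).1 c = 0 := by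
    intro x
    have hxmem : x.1 ∈ Pperp p d Φ := x.2
    set g0 : Fin d → ℤ := (p ^ k) • m₀ with hg0
    set η : Full p d := fun n => (Φ m₀)⁻¹ * x.1 (n + (c - g0)) with hη
    have hηmem : η ∈ Pperp p d Φ :=
      LCAAux.const_mul_mem (Φ m₀)⁻¹ (shift_mem_Pperp p d Φ (c - g0) hxmem)
    set Gset : Finset (Fin d → ℤ) :=
      ((Φ.support ∪ Ψ.support).erase m₀).image (fun m => (p ^ k) • m) with hGset
    have hsmulL : ∀ (m : Fin d → ℤ), m ⟨d - 1, by omega⟩ = 0 →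
        ((p ^ k) • m) ⟨d - 1, by omega⟩ = 0 := by
      intro m hm
      show (p ^ k) • m ⟨d - 1, by omega⟩ = 0
      rw [hm, smul_zero]
    have hg0L : g0 ⟨d - 1, by omega⟩ = 0 := hsmulL m₀ (hΦsupp m₀ hm₀Φ)
    have hGL : ∀ g ∈ Gset, g ⟨d - 1, by omega⟩ = 0 := by
      intro g hg
      obtain ⟨m, hm, rfl⟩ := Finset.mem_image.mp hg
      obtain ⟨-, hmm⟩ := Finset.mem_erase.mp hm
      rcases Finset.mem_union.mp hmm with h | h
      · exact hsmulL m (hΦsupp m h)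
      · exact hsmulL m (hΨsupp m h)
    have hsepa : ∀ g ∈ Gset, ∀ n : Fin d → ℤ,
        ¬ ((∀ i, (n i - g0 i).natAbs ≤ r + 2 * r * R0)
            ∧ (∀ i, (n i - g i).natAbs ≤ r + 2 * r * R0)) := by
      rintro g hg n ⟨hb0, hbg⟩
      obtain ⟨m, hm, rfl⟩ := Finset.mem_image.mp hg
      obtain ⟨hmne, -⟩ := Finset.mem_erase.mp hm
      obtain ⟨i, hi⟩ : ∃ i, m i ≠ m₀ i := by
        by_contra hcon
        push_neg at hcon
        exact hmne (funext hcon)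
      have h1 := hb0 i
      have h2 := hbg i
      have e1 : g0 i = (p ^ k : ℤ) * m₀ i := by
        show (p ^ k) • m₀ i = (p ^ k : ℤ) * m₀ i
        rw [nsmul_eq_mul]
        push_cast
        ring
      have e2 : ((p ^ k) • m) i = (p ^ k : ℤ) * m i := by
        show (p ^ k) • m i = (p ^ k : ℤ) * m i
        rw [nsmul_eq_mul]
        push_cast
        ring
      rw [e1] at h1
      rw [e2] at h2
      have hmul : ((p ^ k : ℤ) * m i - (p ^ k : ℤ) * m₀ i).natAbs
          = (p ^ k) * (m i - m₀ i).natAbs := by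
        rw [← mul_sub, Int.natAbs_mul]
        congr 1
      have h3 : 1 ≤ (m i - m₀ i).natAbs := by
        have : m i - m₀ i ≠ 0 := fun hcontra => hi (by omega)
        omega
      have h4 : p ^ k ≤ (p ^ k) * (m i - m₀ i).natAbs :=
        Nat.le_mul_of_pos_right _ (by omega)
      have h5 : ((p ^ k : ℤ) * m i - (p ^ k : ℤ) * m₀ i).natAbs
          ≤ (n i - (p ^ k : ℤ) * m₀ i).natAbs + (n i - (p ^ k : ℤ) * m i).natAbs := by
        have heq : (p ^ k : ℤ) * m i - (p ^ k : ℤ) * m₀ i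
            = (n i - (p ^ k : ℤ) * m₀ i) - (n i - (p ^ k : ℤ) * m i) := by ring
        rw [heq]
        exact Int.natAbs_sub_le _ _
      rw [hmul] at h5
      omega
    obtain ⟨δ, hδmem, hδ1, hδ2⟩ := LCAAux.glue hd0 Φ hΦsupp hΦne r R0 hR0 η hηmem
      g0 hg0L Gset hGL hsepa
    have hzc : ∀ w : Fin d → ℤ, (∀ i, (w i).natAbs ≤ r) → δ (c + w) = x.1 (c + w) := by
      intro w hwr
      have hrel := LCAAux.rel_scale (p := p) hδmem k w
      have e : c + w = w + (p ^ k) • eLast d := by rw [hc]; exact add_comm _ _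
      have hsum : ∑ m ∈ Φ.support, Φ m * δ (w + (p ^ k) • m)
          = Φ m₀ * δ (w + (p ^ k) • m₀) := by
        refine Finset.sum_eq_single m₀ (fun m hm hne => ?_) (fun hcon => absurd hm₀Φ hcon)
        have hmG : (p ^ k) • m ∈ Gset := Finset.mem_image.mpr
          ⟨m, Finset.mem_erase.mpr ⟨hne, Finset.mem_union_left _ hm⟩, rfl⟩
        rw [show w + (p ^ k) • m = (p ^ k) • m + w from add_comm _ _,
          hδ2 _ hmG w hwr, mul_zero]
      have e3 : w + (p ^ k) • m₀ = g0 + w := by rw [hg0]; exact add_comm _ _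
      rw [e, hrel, hsum, e3, hδ1 w hwr, hη]
      dsimp only
      have e4 : g0 + w + (c - g0) = c + w := by abel
      rw [e4, ← mul_assoc, mul_inv_cancel₀ (Finsupp.mem_support_iff.mp hm₀Φ), one_mul]
      rw [e]
    set Z : ↥(PperpGroup p d Φ) := ⟨δ, hδmem⟩ with hZ
    have step1 : (φ x).1 c = (φ Z).1 c := by
      refine hwin c x Z fun w hw => ?_
      rw [show w + c = c + w from add_comm _ _]
      exact (hzc w (hrW w hw)).symm
    have step2 : (φ Z).1 c = 0 := by
      have hrelZ := LCAAux.rel_scale (p := p) (Φ := Ψ) ((φ Z).2) k 0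
      simp only [zero_add] at hrelZ
      have hzero : ∀ m ∈ Ψ.support, (φ Z).1 ((p ^ k) • m) = 0 := by
        intro m hm
        have hmG : (p ^ k) • m ∈ Gset := Finset.mem_image.mpr
          ⟨m, Finset.mem_erase.mpr ⟨fun hcon => hm₀Ψ (hcon ▸ hm), Finset.mem_union_right _ hm⟩,
            rfl⟩
        have hagree := hwin ((p ^ k) • m) Z (0 : ↥(PperpGroup p d Φ)) (fun w hw => by
          show δ (w + (p ^ k) • m) = (0 : ↥(PperpGroup p d Φ)).1 (w + (p ^ k) • m)
          rw [show w + (p ^ k) • m = (p ^ k) • m + w from add_comm _ _,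
            hδ2 _ hmG w (hrW w hw)]
          rfl)
        rw [h0] at hagree
        rw [hagree]
        rfl
      rw [hc, hrelZ]
      rw [Finset.sum_congr rfl fun m hm => by rw [hzero m hm, mul_zero]]
      exact Finset.sum_const_zero
    rw [step1, step2]
  intro x
  apply Subtype.ext
  funext g
  have h1 := key (shiftSub p d Φ (g - c) x)
  rw [hequiv (g - c) x] at h1
  have e : c + (g - c) = g := by abel
  have h2 : (φ x).1 g = 0 := by
    rw [← e]
    exact h1
  show (φ x).1 g = (0 : ↥(PperpGroup p d Ψ)).1 g
  rw [h2]
  rfl
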